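/- The critical set 𝒩† is a countable subset of the real numbers. -/

import Mathlib

open Complex Topology

noncomputable section AuxNDagger17

/-- `ffc z = z² eᶻ`. -/
private def ffc (z : ℂ) : ℂ := z ^ 2 * Complex.exp z

/-- The derivative of `ffc`. -/
private def fdc (z : ℂ) : ℂ := (z ^ 2 + 2 * z) * Complex.exp z

private lemma hasStrictDerivAt_ffc (z : ℂ) : HasStrictDerivAt ffc (fdc z) z := by
  have h := (hasStrictDerivAt_pow 2 z).mul (Complex.hasStrictDerivAt_exp z)
  have : ((2 : ℕ) : ℂ) * z ^ (2 - 1) * Complex.exp z + z ^ 2 * Complex.exp z = fdc z := by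
    unfold fdc; push_cast; ring
  exact this ▸ h

/-- The linear functional `(x, y) ↦ A x + B y`. -/
private def rowc (A B : ℂ) : ℂ × ℂ →L[ℂ] ℂ :=
  A • ContinuousLinearMap.fst ℂ ℂ ℂ + B • ContinuousLinearMap.snd ℂ ℂ ℂ

@[simp] private lemma rowc_apply (A B : ℂ) (p : ℂ × ℂ) : rowc A B p = A * p.1 + B * p.2 := by
  simp [rowc, smul_eq_mul]

private lemma hasStrict_comp (ℓ : ℂ × ℂ →L[ℂ] ℂ) (p : ℂ × ℂ) :
    HasStrictFDerivAt (fun q => ffc (ℓ q)) (fdc (ℓ p) • ℓ) p :=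
  (hasStrictDerivAt_ffc (ℓ p)).comp_hasStrictFDerivAt p ℓ.hasStrictFDerivAt

/-- first equation -/
private def FF1 (p : ℂ × ℂ) : ℂ := ffc p.1 - ffc p.2
/-- second equation -/
private def FF2 (p : ℂ × ℂ) : ℂ := ffc p.2 - ffc (-p.1 - p.2)
/-- degeneracy polynomial -/
private def Gf (p : ℂ × ℂ) : ℂ :=
  -3 * (p.1 * p.2 * (p.1 + p.2)) + 4 * (p.1 * p.2) - 4 * ((p.1 + p.2) * (p.1 + p.2))
private def Gfa (p : ℂ × ℂ) : ℂ := -3 * p.2 * (2 * p.1 + p.2) + 4 * p.2 - 8 * (p.1 + p.2)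
private def Gfb (p : ℂ × ℂ) : ℂ := -3 * p.1 * (p.1 + 2 * p.2) + 4 * p.1 - 8 * (p.1 + p.2)
/-- second-order degeneracy polynomials -/
private def H1f (p : ℂ × ℂ) : ℂ := p.2 * (p.1 + 2) * Gfb p + p.1 * (p.2 + 2) * Gfa p
private def H2f (p : ℂ × ℂ) : ℂ :=
  p.2 * ((-p.1 - p.2) + 2) * Gfb p -
    ((-p.1 - p.2) * (p.2 + 2) + p.2 * ((-p.1 - p.2) + 2)) * Gfa p

private lemma hasStrict_FF1 (p : ℂ × ℂ) :
    HasStrictFDerivAt FF1 (rowc (fdc p.1) (-fdc p.2)) p := by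
  have h := (hasStrict_comp (ContinuousLinearMap.fst ℂ ℂ ℂ) p).sub
    (hasStrict_comp (ContinuousLinearMap.snd ℂ ℂ ℂ) p)
  have heq : fdc ((ContinuousLinearMap.fst ℂ ℂ ℂ) p) • ContinuousLinearMap.fst ℂ ℂ ℂ -
      fdc ((ContinuousLinearMap.snd ℂ ℂ ℂ) p) • ContinuousLinearMap.snd ℂ ℂ ℂ
      = rowc (fdc p.1) (-fdc p.2) := by
    refine ContinuousLinearMap.ext fun q => ?_
    simp [smul_eq_mul]
    ring
  exact heq ▸ h

private lemma hasStrict_FF2 (p : ℂ × ℂ) :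
    HasStrictFDerivAt FF2 (rowc (fdc (-p.1 - p.2)) (fdc p.2 + fdc (-p.1 - p.2))) p := by
  set ℓ3 : ℂ × ℂ →L[ℂ] ℂ :=
    -(ContinuousLinearMap.fst ℂ ℂ ℂ) - ContinuousLinearMap.snd ℂ ℂ ℂ with hℓ3
  have happ : ∀ q : ℂ × ℂ, ℓ3 q = -q.1 - q.2 := by intro q; simp [hℓ3]
  have h := (hasStrict_comp (ContinuousLinearMap.snd ℂ ℂ ℂ) p).sub (hasStrict_comp ℓ3 p)
  have hfun : FF2 = fun q => ffc ((ContinuousLinearMap.snd ℂ ℂ ℂ) q) - ffc (ℓ3 q) := by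
    funext q; simp [FF2, happ]
  rw [hfun]
  have heq : fdc ((ContinuousLinearMap.snd ℂ ℂ ℂ) p) • ContinuousLinearMap.snd ℂ ℂ ℂ -
      fdc (ℓ3 p) • ℓ3 = rowc (fdc (-p.1 - p.2)) (fdc p.2 + fdc (-p.1 - p.2)) := by
    refine ContinuousLinearMap.ext fun q => ?_
    simp [hℓ3, smul_eq_mul]
    ring
  rw [happ p] at heq
  exact heq ▸ h

private lemma hasStrict_Gf (p : ℂ × ℂ) :
    HasStrictFDerivAt Gf (rowc (Gfa p) (Gfb p)) p := by
  have hx : HasStrictFDerivAt (fun q : ℂ × ℂ => q.1) (ContinuousLinearMap.fst ℂ ℂ ℂ) p :=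
    (ContinuousLinearMap.fst ℂ ℂ ℂ).hasStrictFDerivAt
  have hy : HasStrictFDerivAt (fun q : ℂ × ℂ => q.2) (ContinuousLinearMap.snd ℂ ℂ ℂ) p :=
    (ContinuousLinearMap.snd ℂ ℂ ℂ).hasStrictFDerivAt
  have h := ((((hx.mul hy).mul (hx.add hy)).const_mul (-3 : ℂ)).add
      ((hx.mul hy).const_mul (4 : ℂ))).sub
      (((hx.add hy).mul (hx.add hy)).const_mul (4 : ℂ))
  have heq : rowc (Gfa p) (Gfb p) = ((-3 : ℂ) •
      ((p.1 * p.2) • (ContinuousLinearMap.fst ℂ ℂ ℂ + ContinuousLinearMap.snd ℂ ℂ ℂ) +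
        (p.1 + p.2) • (p.1 • ContinuousLinearMap.snd ℂ ℂ ℂ +
          p.2 • ContinuousLinearMap.fst ℂ ℂ ℂ)) +
      (4 : ℂ) • (p.1 • ContinuousLinearMap.snd ℂ ℂ ℂ + p.2 • ContinuousLinearMap.fst ℂ ℂ ℂ)) -
      (4 : ℂ) • ((p.1 + p.2) • (ContinuousLinearMap.fst ℂ ℂ ℂ + ContinuousLinearMap.snd ℂ ℂ ℂ) +
        (p.1 + p.2) • (ContinuousLinearMap.fst ℂ ℂ ℂ + ContinuousLinearMap.snd ℂ ℂ ℂ)) := by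
    refine ContinuousLinearMap.ext fun q => ?_
    simp [Gfa, Gfb, smul_eq_mul]
    ring
  rw [heq]
  exact h

private def mat2 (A B C D : ℂ) : ℂ × ℂ →L[ℂ] ℂ × ℂ := (rowc A B).prod (rowc C D)

@[simp] private lemma mat2_apply (A B C D : ℂ) (p : ℂ × ℂ) :
    mat2 A B C D p = (A * p.1 + B * p.2, C * p.1 + D * p.2) := by
  simp [mat2, ContinuousLinearMap.prod_apply]

private lemma isolated_zero {g₁ g₂ : ℂ × ℂ → ℂ} {p : ℂ × ℂ} {A B C D : ℂ}
    (h1 : HasStrictFDerivAt g₁ (rowc A B) p) (h2 : HasStrictFDerivAt g₂ (rowc C D) p)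
    (hdet : A * D - B * C ≠ 0) :
    ∃ U ∈ 𝓝 p, ∀ q ∈ U, g₁ q = g₁ p → g₂ q = g₂ p → q = p := by
  set Δ := A * D - B * C with hΔ
  let e : (ℂ × ℂ) ≃L[ℂ] ℂ × ℂ :=
    ContinuousLinearEquiv.equivOfInverse (mat2 A B C D) (mat2 (D/Δ) (-B/Δ) (-C/Δ) (A/Δ))
      (fun x => by
        simp only [mat2_apply]
        refine Prod.ext ?_ ?_ <;> · simp only; field_simp; ring)
      (fun x => by
        simp only [mat2_apply]
        refine Prod.ext ?_ ?_ <;> · simp only; field_simp; ring)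
  have hΦ : HasStrictFDerivAt (fun q => (g₁ q, g₂ q)) (e : (ℂ × ℂ) →L[ℂ] ℂ × ℂ) p := by
    have h := h1.prodMk h2
    have hco : (e : (ℂ × ℂ) →L[ℂ] ℂ × ℂ) = (rowc A B).prod (rowc C D) := by
      refine ContinuousLinearMap.ext fun q => ?_
      rw [ContinuousLinearEquiv.coe_coe]
      exact ContinuousLinearEquiv.equivOfInverse_apply _ _ _ _ _
    rw [hco]; exact h
  set Φ : ℂ × ℂ → ℂ × ℂ := fun q => (g₁ q, g₂ q) with hΦdef
  refine ⟨(hΦ.toOpenPartialHomeomorph Φ).source,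
    (hΦ.toOpenPartialHomeomorph Φ).open_source.mem_nhds hΦ.mem_toOpenPartialHomeomorph_source,
    fun q hq e1 e2 => ?_⟩
  have hΦq : Φ q = Φ p := by simp only [hΦdef, e1, e2]
  have := (hΦ.toOpenPartialHomeomorph Φ).injOn hq hΦ.mem_toOpenPartialHomeomorph_source ?_
  · exact this
  · show (hΦ.toOpenPartialHomeomorph Φ) q = (hΦ.toOpenPartialHomeomorph Φ) p
    rw [hΦ.toOpenPartialHomeomorph_coe]
    exact hΦq

private lemma countable_iso {α : Type*} [TopologicalSpace α]
    [SecondCountableTopology α] (S : Set α) :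
    {x | x ∈ S ∧ ∃ U ∈ 𝓝 x, ∀ q ∈ U, q ∈ S → q = x}.Countable := by
  set s := {x | x ∈ S ∧ ∃ U ∈ 𝓝 x, ∀ q ∈ U, q ∈ S → q = x} with hs
  have hnhds : ∀ x ∈ s, ({x} : Set α) ∈ 𝓝[s] x := by
    intro x hx
    obtain ⟨hxS, U, hU, hUsub⟩ := hx
    have h1 : U ∩ s ∈ 𝓝[s] x := Filter.inter_mem (nhdsWithin_le_nhds hU) self_mem_nhdsWithin
    refine Filter.mem_of_superset h1 ?_
    rintro q ⟨hqU, hqs⟩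
    exact hUsub q hqU hqs.1
  obtain ⟨t, hts, htc, hcov⟩ := TopologicalSpace.countable_cover_nhdsWithin hnhds
  refine htc.mono fun x hx => ?_
  have := hcov hx
  simpa using this

/-- The solution set. -/
private def Sset : Set (ℂ × ℂ) := {p | FF1 p = 0 ∧ FF2 p = 0}
/-- The degenerate solution set. -/
private def Tset : Set (ℂ × ℂ) := {p | p ∈ Sset ∧ Gf p = 0}
/-- Isolated points. -/
private def isoPts (X : Set (ℂ × ℂ)) : Set (ℂ × ℂ) :=
  {x | x ∈ X ∧ ∃ U ∈ 𝓝 x, ∀ q ∈ U, q ∈ X → q = x}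
/-- The doubly degenerate points. -/
private def BadSet : Set (ℂ × ℂ) :=
  {((0 : ℂ), (0 : ℂ)), ((4 : ℂ), (-2 : ℂ)), ((-2 : ℂ), (4 : ℂ)), ((-2 : ℂ), (-2 : ℂ))}

private lemma ffc_eq_zero {z : ℂ} : ffc z = 0 ↔ z = 0 := by
  unfold ffc
  simp [Complex.exp_ne_zero, pow_eq_zero_iff]

private lemma fdc_mul (z : ℂ) : fdc z * z = ffc z * (z + 2) := by unfold fdc ffc; ring

private lemma basic {p : ℂ × ℂ} (hp : p ∈ Sset) (ha : p.1 ≠ 0) :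
    ffc p.1 ≠ 0 ∧ p.2 ≠ 0 ∧ (-p.1 - p.2) ≠ 0 ∧
    fdc p.1 * p.1 = ffc p.1 * (p.1 + 2) ∧ fdc p.2 * p.2 = ffc p.1 * (p.2 + 2) ∧
    fdc (-p.1 - p.2) * (-p.1 - p.2) = ffc p.1 * ((-p.1 - p.2) + 2) := by
  obtain ⟨h1, h2⟩ := hp
  unfold FF1 at h1
  unfold FF2 at h2
  have hw : ffc p.1 ≠ 0 := fun h => ha (ffc_eq_zero.mp h)
  have hfb : ffc p.2 = ffc p.1 := by linear_combination -h1
  have hfc : ffc (-p.1 - p.2) = ffc p.1 := by linear_combination -h1 - h2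
  have hb : p.2 ≠ 0 := fun h => hw (by rw [← hfb, h, ffc_eq_zero])
  have hc : (-p.1 - p.2) ≠ 0 := fun h => hw (by rw [← hfc, h, ffc_eq_zero])
  refine ⟨hw, hb, hc, fdc_mul p.1, ?_, ?_⟩
  · rw [fdc_mul p.2, hfb]
  · rw [fdc_mul (-p.1 - p.2), hfc]

private lemma stepA {p : ℂ × ℂ} (hp : p ∈ Sset) (hiso : p ∉ isoPts Sset) : Gf p = 0 := by
  by_cases ha : p.1 = 0
  · have h1 := hp.1
    unfold FF1 at h1
    have hb : p.2 = 0 := by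
      apply ffc_eq_zero.mp
      rw [ha] at h1
      have h0 : ffc 0 = 0 := ffc_eq_zero.mpr rfl
      linear_combination h0 - h1
    simp [Gf, ha, hb]
  · by_contra hG
    obtain ⟨hw, hb, hc, hda, hdb, hdc⟩ := basic hp ha
    have hdet : fdc p.1 * (fdc p.2 + fdc (-p.1 - p.2)) - (-fdc p.2) * fdc (-p.1 - p.2) ≠ 0 := by
      intro h0
      apply hG
      have key : (fdc p.1 * (fdc p.2 + fdc (-p.1 - p.2)) - (-fdc p.2) * fdc (-p.1 - p.2)) *
          (p.1 * p.2 * (-p.1 - p.2)) = ffc p.1 ^ 2 * Gf p := by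
        simp only [Gf]
        linear_combination ((-p.1 - p.2) * fdc p.2 * p.2 + p.2 * fdc (-p.1 - p.2) * (-p.1 - p.2)) * hda +
          ((-p.1 - p.2) * ffc p.1 * (p.1 + 2) + p.1 * fdc (-p.1 - p.2) * (-p.1 - p.2)) * hdb +
          (p.2 * ffc p.1 * (p.1 + 2) + p.1 * ffc p.1 * (p.2 + 2)) * hdc
      rw [h0, zero_mul] at key
      exact (mul_eq_zero.mp key.symm).resolve_left (pow_ne_zero 2 hw)
    obtain ⟨U, hU, huniq⟩ := isolated_zero (hasStrict_FF1 p) (hasStrict_FF2 p) hdet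
    exact hiso ⟨hp, U, hU, fun q hq hqS =>
      huniq q hq (by rw [hqS.1, hp.1]) (by rw [hqS.2, hp.2])⟩

private lemma stepB {p : ℂ × ℂ} (hp : p ∈ Tset) (hiso : p ∉ isoPts Tset) :
    p = ((0 : ℂ), (0 : ℂ)) ∨ (H1f p = 0 ∧ H2f p = 0) := by
  obtain ⟨hpS, hpG⟩ := hp
  by_cases ha : p.1 = 0
  · left
    have h1 := hpS.1
    unfold FF1 at h1
    have hb : p.2 = 0 := by
      apply ffc_eq_zero.mp
      rw [ha] at h1
      have h0 : ffc 0 = 0 := ffc_eq_zero.mpr rfl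
      linear_combination h0 - h1
    exact Prod.ext ha hb
  · right
    obtain ⟨hw, hb, hc, hda, hdb, hdc⟩ := basic hpS ha
    constructor
    · by_contra hH1
      have hdet : fdc p.1 * Gfb p - (-fdc p.2) * Gfa p ≠ 0 := by
        intro h0
        apply hH1
        have key : (fdc p.1 * Gfb p - (-fdc p.2) * Gfa p) * (p.1 * p.2) = ffc p.1 * H1f p := by
          simp only [H1f, Gfa, Gfb]
          linear_combination (p.2 * (-3 * p.1 * (p.1 + 2 * p.2) + 4 * p.1 - 8 * (p.1 + p.2))) * hda +
            (p.1 * (-3 * p.2 * (2 * p.1 + p.2) + 4 * p.2 - 8 * (p.1 + p.2))) * hdb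
        rw [h0, zero_mul] at key
        exact (mul_eq_zero.mp key.symm).resolve_left hw
      obtain ⟨U, hU, huniq⟩ := isolated_zero (hasStrict_FF1 p) (hasStrict_Gf p) hdet
      exact hiso ⟨⟨hpS, hpG⟩, U, hU, fun q hq hqT =>
        huniq q hq (by rw [hqT.1.1, hpS.1]) (by rw [hqT.2, hpG])⟩
    · by_contra hH2
      have hdet : fdc (-p.1 - p.2) * Gfb p - (fdc p.2 + fdc (-p.1 - p.2)) * Gfa p ≠ 0 := by
        intro h0
        apply hH2
        have key : (fdc (-p.1 - p.2) * Gfb p - (fdc p.2 + fdc (-p.1 - p.2)) * Gfa p) *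
            (p.2 * (-p.1 - p.2)) = ffc p.1 * H2f p := by
          simp only [H2f, Gfa, Gfb]
          linear_combination (-(-p.1 - p.2) * (-3 * p.2 * (2 * p.1 + p.2) + 4 * p.2 - 8 * (p.1 + p.2))) * hdb +
            (p.2 * (-3 * p.1 * (p.1 + 2 * p.2) + 4 * p.1 - 8 * (p.1 + p.2)) -
              p.2 * (-3 * p.2 * (2 * p.1 + p.2) + 4 * p.2 - 8 * (p.1 + p.2))) * hdc
        rw [h0, zero_mul] at key
        exact (mul_eq_zero.mp key.symm).resolve_left hw
      obtain ⟨U, hU, huniq⟩ := isolated_zero (hasStrict_FF2 p) (hasStrict_Gf p) hdet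
      exact hiso ⟨⟨hpS, hpG⟩, U, hU, fun q hq hqT =>
        huniq q hq (by rw [hqT.1.2, hpS.2]) (by rw [hqT.2, hpG])⟩

private lemma stepC {p : ℂ × ℂ} (hG : Gf p = 0) (hH1 : H1f p = 0) (hH2 : H2f p = 0) :
    p ∈ BadSet := by
  obtain ⟨a, b⟩ := p
  simp only [Gf, H1f, H2f, Gfa, Gfb] at hG hH1 hH2
  have hK : a ^ 3 * (a - 4) * (a + 2) = 0 := by
    linear_combination
      ((32 : ℂ)/18 - (16/18) * b + (52/18) * a - (30/18) * a * b - (1/4) * a * b^2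
        - (9/18) * a^2 - a^2 * b - (1/4) * a^3) * hG +
      ((-8 : ℂ)/18 + (4/18) * b - (5/18) * a + (1/4) * a * b + (1/4) * a^2) * hH1 +
      ((1 : ℂ)/18 * a) * hH2
  have hcases : a = 0 ∨ a = 4 ∨ a = -2 := by
    rcases mul_eq_zero.mp hK with h | h
    · rcases mul_eq_zero.mp h with h' | h'
      · exact Or.inl (by
          have := pow_eq_zero_iff (n := 3) (by norm_num) |>.mp h'
          exact this)
      · exact Or.inr (Or.inl (sub_eq_zero.mp h'))
    · exact Or.inr (Or.inr (eq_neg_of_add_eq_zero_left h))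
  rcases hcases with ha | ha | ha
  · subst ha
    have hb : b = 0 := by
      have hb2 : b ^ 2 = 0 := by linear_combination (-(1 : ℂ)/4) * hG
      exact pow_eq_zero_iff (n := 2) (by norm_num) |>.mp hb2
    subst hb
    simp [BadSet]
  · subst ha
    have hb : b = -2 := by
      have hb2 : (b + 2) ^ 2 = 0 := by linear_combination (-(1 : ℂ)/16) * hG
      have := pow_eq_zero_iff (n := 2) (by norm_num) |>.mp hb2
      exact eq_neg_of_add_eq_zero_left this
    subst hb
    simp [BadSet]
  · subst ha
    have hb : b = 4 ∨ b = -2 := by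
      have hb2 : (b - 4) * (b + 2) = 0 := by linear_combination ((1 : ℂ)/2) * hG
      rcases mul_eq_zero.mp hb2 with h | h
      · exact Or.inl (sub_eq_zero.mp h)
      · exact Or.inr (eq_neg_of_add_eq_zero_left h)
    rcases hb with hb | hb <;> subst hb <;> simp [BadSet]

end AuxNDagger17

/-- The new critical set 𝒩†. -/
def criticalNDagger : Set ℝ :=
  {L : ℝ | 0 < L ∧ ∃ a b : ℂ,
    a ^ 2 * Complex.exp a = b ^ 2 * Complex.exp b ∧
    b ^ 2 * Complex.exp b = (a + b) ^ 2 * Complex.exp (-(a + b)) ∧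
    (L : ℂ) ^ 2 = -(a ^ 2 + a * b + b ^ 2)}

theorem stmt17 : Set.Countable criticalNDagger := by
  classical
  set S₀ : Set (ℂ × ℂ) := isoPts Sset ∪ isoPts Tset ∪ BadSet with hS₀
  have hS₀c : S₀.Countable := by
    refine (Set.Countable.union (Set.Countable.union ?_ ?_) ?_)
    · exact countable_iso Sset
    · exact countable_iso Tset
    · have : BadSet.Finite := by
        unfold BadSet
        exact (Set.finite_singleton _).insert _ |>.insert _ |>.insert _
      exact this.countable
  have hsub : Sset ⊆ S₀ := by
    intro p hp
    by_cases h1 : p ∈ isoPts Sset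
    · exact Or.inl (Or.inl h1)
    · have hT : p ∈ Tset := ⟨hp, stepA hp h1⟩
      by_cases h2 : p ∈ isoPts Tset
      · exact Or.inl (Or.inr h2)
      · rcases stepB hT h2 with h | ⟨hh1, hh2⟩
        · exact Or.inr (by rw [h]; simp [BadSet])
        · exact Or.inr (stepC hT.2 hh1 hh2)
  have himg : criticalNDagger ⊆
      (fun p : ℂ × ℂ => Real.sqrt (-(p.1 ^ 2 + p.1 * p.2 + p.2 ^ 2)).re) '' S₀ := by
    rintro L ⟨hL, a, b, e1, e2, e3⟩
    have hmem : ((a, b) : ℂ × ℂ) ∈ Sset := by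
      constructor
      · show ffc a - ffc b = 0
        unfold ffc; rw [e1]; ring
      · show ffc b - ffc (-a - b) = 0
        rw [show (-a - b : ℂ) = -(a + b) from by ring]
        unfold ffc; rw [e2]; ring
    refine ⟨(a, b), hsub hmem, ?_⟩
    show Real.sqrt (-(a ^ 2 + a * b + b ^ 2)).re = L
    have hre : (-(a ^ 2 + a * b + b ^ 2)) = ((L ^ 2 : ℝ) : ℂ) := by
      rw [← e3]; push_cast; ring
    rw [hre, Complex.ofReal_re, Real.sqrt_sq hL.le]
  exact Set.Countable.mono himg (hS₀c.image _)
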